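/- Let a, b, c ∈ {-1, 1} in a field F and let A be the 4×4 matrix [[0, -c, -1, 0], [c, 0, 0, -1], [1, 0, 0, b], [0, 1, a, 0]]. If the rank of A is even, then a = -b (equivalently, A is skew-symmetric). -/

import Mathlib

open Matrix

lemma rank_le_three_of_det_eq_zero {F : Type*} [Field F]
    (M : Matrix (Fin 4) (Fin 4) F) (hd : M.det = 0) : M.rank ≤ 3 := by
  obtain ⟨v, hv, hMv⟩ := (Matrix.exists_mulVec_eq_zero_iff).mpr hd
  have hk : v ∈ LinearMap.ker M.mulVecLin := by simpa [Matrix.mulVecLin_apply] using hMv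
  have hker : 0 < Module.finrank F (LinearMap.ker M.mulVecLin) := by
    apply Module.finrank_pos_iff.mpr
    exact ⟨⟨v, hk⟩, 0, fun hh => hv (by simpa using congrArg Subtype.val hh)⟩
  have hrn := LinearMap.finrank_range_add_finrank_ker M.mulVecLin
  have hdom : Module.finrank F (Fin 4 → F) = 4 := by
    simp [Module.finrank_fintype_fun_eq_card]
  rw [hdom] at hrn
  have hr : M.rank = Module.finrank F (LinearMap.range M.mulVecLin) := rfl
  omega

lemma three_le_rank {F : Type*} [Field F]
    (M : Matrix (Fin 4) (Fin 4) F) (L : Matrix (Fin 3) (Fin 4) F)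
    (R : Matrix (Fin 4) (Fin 3) F) (h : IsUnit (L * M * R).det) : 3 ≤ M.rank := by
  have h1 : (L * M * R).rank = 3 := by
    rw [Matrix.rank_of_isUnit _ ((Matrix.isUnit_iff_isUnit_det _).mpr h)]
    simp
  calc 3 = (L * M * R).rank := h1.symm
    _ ≤ (M * R).rank := by rw [Matrix.mul_assoc]; exact Matrix.rank_mul_le_right _ _
    _ ≤ M.rank := Matrix.rank_mul_le_left _ _

lemma rank_eq_three {F : Type*} [Field F]
    (M : Matrix (Fin 4) (Fin 4) F) (hd : M.det = 0) (L : Matrix (Fin 3) (Fin 4) F)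
    (R : Matrix (Fin 4) (Fin 3) F) (h : IsUnit (L * M * R).det) : M.rank = 3 :=
  le_antisymm (rank_le_three_of_det_eq_zero M hd) (three_le_rank M L R h)

theorem lemma_n4 {F : Type*} [Field F] (a b c : F)
    (ha : a = 1 ∨ a = -1) (hb : b = 1 ∨ b = -1) (hc : c = 1 ∨ c = -1)
    (h : Even (Matrix.rank !![0, -c, -1, 0; c, 0, 0, -1; 1, 0, 0, b; 0, 1, a, 0])) :
    a = -b := by
  by_cases h2 : (2 : F) = 0
  · rcases ha with ha' | ha' <;> rcases hb with hb' | hb' <;> subst ha' hb'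
    · linear_combination h2
    · ring
    · ring
    · linear_combination -h2
  · rcases ha with ha' | ha' <;> rcases hb with hb' | hb' <;> subst ha' hb'
    · exfalso
      rcases hc with hc' | hc' <;> subst hc'
      · have hr := rank_eq_three !![0, -(1:F), -1, 0; 1, 0, 0, -1; 1, 0, 0, 1; 0, 1, 1, 0]
          (by simp [Matrix.det_succ_row_zero, Fin.sum_univ_succ, Fin.succAbove])
          !![1,0,0,0; 0,1,0,0; 0,0,1,0] !![1,0,0; 0,1,0; 0,0,0; 0,0,1]
          (by
            have hd : ((!![1,0,0,0; 0,1,0,0; 0,0,1,0] : Matrix (Fin 3) (Fin 4) F) *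
                (!![0, -(1:F), -1, 0; 1, 0, 0, -1; 1, 0, 0, 1; 0, 1, 1, 0] : Matrix (Fin 4) (Fin 4) F) *
                (!![1,0,0; 0,1,0; 0,0,0; 0,0,1] : Matrix (Fin 4) (Fin 3) F)).det = 2 := by
              simp [Matrix.det_fin_three, Matrix.mul_apply, Fin.sum_univ_succ, Fin.succAbove]
              norm_num
            rw [hd]; exact isUnit_iff_ne_zero.mpr h2)
        rw [hr] at h
        simp [Nat.even_iff] at h
      · have hr := rank_eq_three !![0, -(-1:F), -1, 0; -1, 0, 0, -1; 1, 0, 0, 1; 0, 1, 1, 0]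
          (by simp [Matrix.det_succ_row_zero, Fin.sum_univ_succ, Fin.succAbove])
          !![1,0,0,0; 0,1,0,0; 0,0,0,1] !![1,0,0; 0,1,0; 0,0,1; 0,0,0]
          (by
            have hd : ((!![1,0,0,0; 0,1,0,0; 0,0,0,1] : Matrix (Fin 3) (Fin 4) F) *
                (!![0, -(-1:F), -1, 0; -1, 0, 0, -1; 1, 0, 0, 1; 0, 1, 1, 0] : Matrix (Fin 4) (Fin 4) F) *
                (!![1,0,0; 0,1,0; 0,0,1; 0,0,0] : Matrix (Fin 4) (Fin 3) F)).det = 2 := by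
              simp [Matrix.det_fin_three, Matrix.mul_apply, Fin.sum_univ_succ, Fin.succAbove]
              norm_num
            rw [hd]; exact isUnit_iff_ne_zero.mpr h2)
        rw [hr] at h
        simp [Nat.even_iff] at h
    · ring
    · ring
    · exfalso
      rcases hc with hc' | hc' <;> subst hc'
      · have hr := rank_eq_three !![0, -(1:F), -1, 0; 1, 0, 0, -1; 1, 0, 0, -1; 0, 1, -1, 0]
          (by simp [Matrix.det_succ_row_zero, Fin.sum_univ_succ, Fin.succAbove])
          !![1,0,0,0; 0,1,0,0; 0,0,0,1] !![1,0,0; 0,1,0; 0,0,1; 0,0,0]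
          (by
            have hd : ((!![1,0,0,0; 0,1,0,0; 0,0,0,1] : Matrix (Fin 3) (Fin 4) F) *
                (!![0, -(1:F), -1, 0; 1, 0, 0, -1; 1, 0, 0, -1; 0, 1, -1, 0] : Matrix (Fin 4) (Fin 4) F) *
                (!![1,0,0; 0,1,0; 0,0,1; 0,0,0] : Matrix (Fin 4) (Fin 3) F)).det = -2 := by
              simp [Matrix.det_fin_three, Matrix.mul_apply, Fin.sum_univ_succ, Fin.succAbove]
              norm_num
            rw [hd]; exact isUnit_iff_ne_zero.mpr (neg_ne_zero.mpr h2))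
        rw [hr] at h
        simp [Nat.even_iff] at h
      · have hr := rank_eq_three !![0, -(-1:F), -1, 0; -1, 0, 0, -1; 1, 0, 0, -1; 0, 1, -1, 0]
          (by simp [Matrix.det_succ_row_zero, Fin.sum_univ_succ, Fin.succAbove])
          !![1,0,0,0; 0,1,0,0; 0,0,1,0] !![1,0,0; 0,1,0; 0,0,0; 0,0,1]
          (by
            have hd : ((!![1,0,0,0; 0,1,0,0; 0,0,1,0] : Matrix (Fin 3) (Fin 4) F) *
                (!![0, -(-1:F), -1, 0; -1, 0, 0, -1; 1, 0, 0, -1; 0, 1, -1, 0] : Matrix (Fin 4) (Fin 4) F) *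
                (!![1,0,0; 0,1,0; 0,0,0; 0,0,1] : Matrix (Fin 4) (Fin 3) F)).det = -2 := by
              simp [Matrix.det_fin_three, Matrix.mul_apply, Fin.sum_univ_succ, Fin.succAbove]
              norm_num
            rw [hd]; exact isUnit_iff_ne_zero.mpr (neg_ne_zero.mpr h2))
        rw [hr] at h
        simp [Nat.even_iff] at h
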